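/- arXiv:1110.0458 — 4 statements merged into one kernel-verified Lean document; each statement's English description precedes it below -/
import Mathlib

section
/- The operators ρ_w on the tensor algebra, defined by ρ_1 = id and ρ_w(a₁⊗...⊗a_w) = ρ_{w-1}(a₁⊗...⊗a_{w-1}) ⊗ a_w − ρ_{w-1}(a₂⊗...⊗a_w) ⊗ a₁, satisfy the identity w·(a₁⊗...⊗a_w) = ∑_{k=0}^{w-1} (a₁⊗...⊗a_k) ⧢ ρ_{w-k}(a_{k+1}⊗...⊗a_w), where ⧢ denotes the shuffle product and the k=0 term is ρ_w(a₁⊗...⊗a_w). -/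
/- We model the weight-graded tensor algebra of a `ℚ`-vector space with basis `V`
as the free `ℚ`-module on words `List V`; elementary tensors are single words. -/

/-- Prepend a letter to every word (linear "a ⊗ -"). -/
noncomputable def consL {V : Type*} (a : V) (x : List V →₀ ℚ) : List V →₀ ℚ :=
  Finsupp.mapDomain (fun l => a :: l) x

/-- Append a letter to every word (linear "- ⊗ a"). -/
noncomputable def appR {V : Type*} (a : V) (x : List V →₀ ℚ) : List V →₀ ℚ :=
  Finsupp.mapDomain (fun l => l ++ [a]) x

/-- The shuffle product of two elementary tensors (words). -/
noncomputable def shuffle {V : Type*} : List V → List V → (List V →₀ ℚ)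
  | [], v => Finsupp.single v 1
  | a :: u, [] => Finsupp.single (a :: u) 1
  | a :: u, b :: v => consL a (shuffle u (b :: v)) + consL b (shuffle (a :: u) v)
  termination_by u v => u.length + v.length

/-- The Dynkin-type operator `ρ` on elementary tensors:
`ρ₁ = id` and `ρ_w(a₁⊗…⊗a_w) = ρ_{w-1}(a₁⊗…⊗a_{w-1}) ⊗ a_w − ρ_{w-1}(a₂⊗…⊗a_w) ⊗ a₁`. -/
noncomputable def rho {V : Type*} : List V → (List V →₀ ℚ)
  | [] => 0
  | [a] => Finsupp.single [a] 1
  | a :: b :: l =>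
      appR ((b :: l).getLast (List.cons_ne_nil _ _)) (rho (a :: (b :: l).dropLast))
        - appR a (rho (b :: l))
  termination_by l => l.length
  decreasing_by all_goals simp [List.length_dropLast]

/-- Linear extension of `ρ`. -/
noncomputable def rhoL {V : Type*} (x : List V →₀ ℚ) : List V →₀ ℚ :=
  x.sum fun l c => c • rho l


/-- Bilinear extension of the shuffle product. -/
noncomputable def shMul {V : Type*} (x y : List V →₀ ℚ) : List V →₀ ℚ :=
  x.sum fun u c => y.sum fun v d => (c * d) • shuffle u v

section Aux
variable {V : Type*}


lemma shuffle_nil_left (v : List V) : shuffle [] v = Finsupp.single v 1 := by rw [shuffle]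
lemma shuffle_nil_right (u : List V) : shuffle u [] = Finsupp.single u 1 := by
  cases u <;> rw [shuffle]
lemma shuffle_cons_cons (a b : V) (u v : List V) :
    shuffle (a :: u) (b :: v) = consL a (shuffle u (b :: v)) + consL b (shuffle (a :: u) v) := by
  rw [shuffle]

noncomputable def consLL (a : V) : (List V →₀ ℚ) →ₗ[ℚ] (List V →₀ ℚ) :=
  Finsupp.lmapDomain ℚ ℚ (fun l => a :: l)
noncomputable def appRL (a : V) : (List V →₀ ℚ) →ₗ[ℚ] (List V →₀ ℚ) :=
  Finsupp.lmapDomain ℚ ℚ (fun l => l ++ [a])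
lemma consL_eq (a : V) (x : List V →₀ ℚ) : consL a x = consLL a x := rfl
lemma appR_eq (a : V) (x : List V →₀ ℚ) : appR a x = appRL a x := rfl

lemma consL_single (a : V) (u : List V) (d : ℚ) :
    consL a (Finsupp.single u d) = Finsupp.single (a :: u) d := Finsupp.mapDomain_single
lemma appR_single (a : V) (u : List V) (d : ℚ) :
    appR a (Finsupp.single u d) = Finsupp.single (u ++ [a]) d := Finsupp.mapDomain_single
lemma consL_add (a : V) (x y : List V →₀ ℚ) :
    consL a (x + y) = consL a x + consL a y := Finsupp.mapDomain_add
lemma appR_add (a : V) (x y : List V →₀ ℚ) :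
    appR a (x + y) = appR a x + appR a y := Finsupp.mapDomain_add
lemma appR_sub (a : V) (x y : List V →₀ ℚ) :
    appR a (x - y) = appR a x - appR a y := map_sub (appRL a) x y
lemma appR_smul (a : V) (c : ℚ) (x : List V →₀ ℚ) :
    appR a (c • x) = c • appR a x := map_smul (appRL a) c x
lemma appR_zero (a : V) : appR a (0 : List V →₀ ℚ) = 0 := map_zero (appRL a)

lemma consL_appR (d c : V) (x : List V →₀ ℚ) :
    consL d (appR c x) = appR c (consL d x) := by
  rw [consL, appR, ← Finsupp.mapDomain_comp, consL, appR, ← Finsupp.mapDomain_comp]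
  rfl

theorem shuffle_concat (u v : List V) (b c : V) :
    shuffle (u ++ [b]) (v ++ [c]) =
      appR c (shuffle (u ++ [b]) v) + appR b (shuffle u (v ++ [c])) := by
  match u, v with
  | [], [] =>
      simp [shuffle_cons_cons, shuffle_nil_left, shuffle_nil_right, consL_single, appR_single,
        add_comm]
  | a :: u', [] =>
      have ih := shuffle_concat u' [] b c
      simp only [List.nil_append, List.cons_append] at *
      rw [shuffle_cons_cons, ih, shuffle_cons_cons]
      simp [consL_add, appR_add, consL_appR, consL_single, appR_single, shuffle_nil_right,
        shuffle_nil_left, List.append_assoc]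
      abel
  | [], d :: v' =>
      have ih := shuffle_concat [] v' b c
      simp only [List.nil_append, List.cons_append] at *
      rw [shuffle_cons_cons, ih, shuffle_cons_cons]
      simp [consL_add, appR_add, consL_appR, consL_single, appR_single, shuffle_nil_right,
        shuffle_nil_left, List.append_assoc]
      abel
  | a :: u', d :: v' =>
      have ih1 := shuffle_concat u' (d :: v') b c
      have ih2 := shuffle_concat (a :: u') v' b c
      simp only [List.cons_append] at *
      rw [shuffle_cons_cons, ih1, ih2, shuffle_cons_cons a d (u' ++ [b]) v',
        shuffle_cons_cons a d u' (v' ++ [c])]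
      simp only [consL_add, appR_add, consL_appR]
      abel
  termination_by u.length + v.length

noncomputable def shL (u : List V) : (List V →₀ ℚ) →ₗ[ℚ] (List V →₀ ℚ) :=
  Finsupp.lsum ℚ fun v => LinearMap.toSpanSingleton ℚ _ (shuffle u v)

lemma shMul_single (u : List V) (y : List V →₀ ℚ) :
    shMul (Finsupp.single u 1) y = shL u y := by
  rw [shMul, Finsupp.sum_single_index]
  · rw [shL, Finsupp.lsum_apply]
    exact Finsupp.sum_congr fun v _ => by rw [one_mul, LinearMap.toSpanSingleton_apply]
  · simp

lemma shMul_single_single (u v : List V) (d : ℚ) :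
    shMul (Finsupp.single u 1) (Finsupp.single v d) = d • shuffle u v := by
  rw [shMul_single, shL, Finsupp.lsum_single, LinearMap.toSpanSingleton_apply]

lemma shMul_sub (u : List V) (y z : List V →₀ ℚ) :
    shMul (Finsupp.single u 1) (y - z)
      = shMul (Finsupp.single u 1) y - shMul (Finsupp.single u 1) z := by
  rw [shMul_single, shMul_single, shMul_single, map_sub]

lemma shMul_zero' (u : List V) : shMul (Finsupp.single u 1) (0 : List V →₀ ℚ) = 0 := by
  rw [shMul_single, map_zero]

lemma shMul_add (u : List V) (y z : List V →₀ ℚ) :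
    shMul (Finsupp.single u 1) (y + z)
      = shMul (Finsupp.single u 1) y + shMul (Finsupp.single u 1) z := by
  rw [shMul_single, shMul_single, shMul_single, map_add]

lemma shMul_nil_left (y : List V →₀ ℚ) : shMul (Finsupp.single ([] : List V) 1) y = y := by
  rw [shMul_single, shL, Finsupp.lsum_apply]
  have : ∀ v : List V,
      ⇑(LinearMap.toSpanSingleton ℚ (List V →₀ ℚ) (shuffle ([] : List V) v))
        = fun d : ℚ => Finsupp.single v d := by
    intro v
    funext d
    rw [LinearMap.toSpanSingleton_apply, shuffle_nil_left, Finsupp.smul_single, smul_eq_mul,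
      mul_one]
  simp only [this]
  exact y.sum_single

lemma shMul_concat_appR (u : List V) (b c : V) (y : List V →₀ ℚ) :
    shMul (Finsupp.single (u ++ [b]) 1) (appR c y)
      = appR c (shMul (Finsupp.single (u ++ [b]) 1) y)
        + appR b (shMul (Finsupp.single u 1) (appR c y)) := by
  induction y using Finsupp.induction_linear with
  | zero => simp [appR_zero, shMul_zero']
  | add y z hy hz =>
      simp only [appR_add, shMul_add, hy, hz]
      abel
  | single v d =>
      simp only [appR_single, shMul_single_single, shuffle_concat, smul_add, appR_smul]

lemma rho_cons (a : V) (t : List V) (h : t ≠ []) :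
    rho (a :: t) = appR (t.getLast h) (rho (a :: t.dropLast)) - appR a (rho t) := by
  cases t with
  | nil => exact absurd rfl h
  | cons b l => rw [rho]

lemma rho_nil : rho ([] : List V) = 0 := by rw [rho]
lemma rho_one (a : V) : rho [a] = Finsupp.single [a] 1 := by rw [rho]

def Laux {V : Type*} [Inhabited V] (l : List V) (k : ℕ) : V := (l.drop k).headI

noncomputable def Faux {V : Type*} [Inhabited V] (l : List V) (k : ℕ) : List V →₀ ℚ :=
  appR (Laux l k) (shMul (Finsupp.single (l.take k) (1 : ℚ)) (rho (l.drop (k + 1))))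

noncomputable def Faux' {V : Type*} [Inhabited V] (l : List V) : ℕ → (List V →₀ ℚ)
  | 0 => 0
  | (j + 1) => Faux l j

noncomputable def Gaux {V : Type*} (m : List V) (a : V) (k : ℕ) : List V →₀ ℚ :=
  if k = m.length then appR a (Finsupp.single m 1)
  else appR a (shMul (Finsupp.single (m.take k) (1 : ℚ)) (rho (m.drop k)))


end Aux

/-- Ree's identity: `w·(a₁⊗…⊗a_w) = ∑_{k=0}^{w-1} (a₁⊗…⊗a_k) ⧢ ρ_{w-k}(a_{k+1}⊗…⊗a_w)`,
where the `k = 0` term is `ρ_w(a₁⊗…⊗a_w)`. -/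
theorem stmt_3 (V : Type*) (l : List V) :
    (l.length : ℚ) • Finsupp.single l (1 : ℚ) =
      ∑ k ∈ Finset.range l.length,
        shMul (Finsupp.single (l.take k) (1 : ℚ)) (rho (l.drop k)) := by
  induction l using List.reverseRecOn with
  | nil => simp
  | append_singleton m a ih =>
    rcases eq_or_ne m [] with rfl | hm
    · simp [shMul_nil_left, rho_one]
    · haveI : Inhabited V := ⟨m.head hm⟩
      have hn0 : 0 < m.length := List.length_pos_iff.mpr hm
      have hlen : (m ++ [a]).length = m.length + 1 := by simp
      have htk : ∀ k ≤ m.length, (m ++ [a]).take k = m.take k :=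
        fun k hk => List.take_append_of_le_length hk
      have hdr : ∀ k ≤ m.length, (m ++ [a]).drop k = m.drop k ++ [a] :=
        fun k hk => List.drop_append_of_le_length hk
      have hL : ∀ k < m.length + 1,
          (m ++ [a]).drop k = Laux (m ++ [a]) k :: (m ++ [a]).drop (k + 1) := by
        intro k hk
        have hne : (m ++ [a]).drop k ≠ [] := by
          apply List.ne_nil_of_length_pos
          rw [List.length_drop, hlen]
          omega
        cases h : (m ++ [a]).drop k with
        | nil => exact absurd h hne
        | cons x t =>
          have h2 : t = (m ++ [a]).drop (k + 1) := by rw [← List.tail_drop, h]; rfl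
          rw [Laux, h, h2]
          rfl
      have hM : ∀ k < m.length, m.drop k = Laux (m ++ [a]) k :: m.drop (k + 1) := by
        intro k hk
        have h1 := hL k (by omega)
        rw [hdr k (by omega), hdr (k + 1) (by omega),
          show (Laux (m ++ [a]) k :: (m.drop (k + 1) ++ [a]))
            = (Laux (m ++ [a]) k :: m.drop (k + 1)) ++ [a] from rfl] at h1
        exact List.append_cancel_right h1
      have htk1 : ∀ k < m.length + 1,
          (m ++ [a]).take (k + 1) = (m ++ [a]).take k ++ [Laux (m ++ [a]) k] := by
        intro k hk
        rw [List.take_add]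
        congr 1
        rw [hL k hk]
        rfl
      have hrho : ∀ k < m.length, rho ((m ++ [a]).drop k)
          = appR a (rho (m.drop k))
            - appR (Laux (m ++ [a]) k) (rho ((m ++ [a]).drop (k + 1))) := by
        intro k hk
        have e1 : (m ++ [a]).drop k = Laux (m ++ [a]) k :: (m.drop (k + 1) ++ [a]) := by
          rw [hL k (by omega), hdr (k + 1) (by omega)]
        have ht : m.drop (k + 1) ++ [a] ≠ [] := by simp
        rw [e1, rho_cons (Laux (m ++ [a]) k) _ ht]
        congr 1
        · rw [List.getLast_concat, List.dropLast_concat, ← hM k hk]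
        · rw [← hdr (k + 1) (by omega)]
      have hFend : Faux' (m ++ [a]) (m.length + 1) = 0 := by
        show Faux (m ++ [a]) m.length = 0
        rw [Faux, show (m ++ [a]).drop (m.length + 1) = [] from by
            rw [← hlen]; exact List.drop_length,
          rho_nil, shMul_zero', appR_zero]
      have key : ∀ k ∈ Finset.range (m.length + 1),
          shMul (Finsupp.single ((m ++ [a]).take k) (1 : ℚ)) (rho ((m ++ [a]).drop k))
            = Gaux m a k + (Faux' (m ++ [a]) k - Faux' (m ++ [a]) (k + 1)) := by
        intro k hk
        rw [Finset.mem_range] at hk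
        match k with
        | 0 =>
          show _ = Gaux m a 0 + ((0 : List V →₀ ℚ) - Faux (m ++ [a]) 0)
          rw [List.take_zero, List.drop_zero, shMul_nil_left]
          have h0 : rho (m ++ [a]) = appR a (rho m)
              - appR (Laux (m ++ [a]) 0) (rho ((m ++ [a]).drop 1)) := by
            have h := hrho 0 hn0
            rwa [List.drop_zero, List.drop_zero] at h
          rw [h0, Gaux, if_neg (by omega), Faux]
          simp only [List.take_zero, List.drop_zero, shMul_nil_left, Nat.zero_add, zero_add]
          rw [zero_sub, ← sub_eq_add_neg]
        | (j + 1) =>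
          show _ = Gaux m a (j + 1) + (Faux (m ++ [a]) j - Faux (m ++ [a]) (j + 1))
          rcases Nat.lt_or_ge (j + 1) m.length with hlt | hge
          · rw [hrho (j + 1) hlt, htk1 j (by omega), shMul_sub,
              shMul_concat_appR ((m ++ [a]).take j) (Laux (m ++ [a]) j) a
                (rho (m.drop (j + 1))),
              shMul_concat_appR ((m ++ [a]).take j) (Laux (m ++ [a]) j) (Laux (m ++ [a]) (j + 1))
                (rho ((m ++ [a]).drop (j + 1 + 1)))]
            have eG : Gaux m a (j + 1)
                = appR a (shMul (Finsupp.single ((m ++ [a]).take j ++ [Laux (m ++ [a]) j]) (1 : ℚ))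
                    (rho (m.drop (j + 1)))) := by
              rw [Gaux, if_neg (by omega), ← htk1 j (by omega), htk (j + 1) (by omega)]
            have eF1 : Faux (m ++ [a]) j
                = appR (Laux (m ++ [a]) j) (shMul (Finsupp.single ((m ++ [a]).take j) (1 : ℚ))
                    (appR a (rho (m.drop (j + 1)))))
                  - appR (Laux (m ++ [a]) j) (shMul (Finsupp.single ((m ++ [a]).take j) (1 : ℚ))
                    (appR (Laux (m ++ [a]) (j + 1)) (rho ((m ++ [a]).drop (j + 1 + 1))))) := by
              rw [Faux, hrho (j + 1) hlt, shMul_sub, appR_sub]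
            have eF2 : Faux (m ++ [a]) (j + 1)
                = appR (Laux (m ++ [a]) (j + 1))
                    (shMul (Finsupp.single ((m ++ [a]).take j ++ [Laux (m ++ [a]) j]) (1 : ℚ))
                      (rho ((m ++ [a]).drop (j + 1 + 1)))) := by
              rw [Faux, htk1 j (by omega)]
            rw [eG, eF1, eF2]
            abel
          · have hjn : j + 1 = m.length := by omega
            have hdropn : (m ++ [a]).drop (j + 1) = [a] := by
              rw [hjn, hdr m.length le_rfl, List.drop_length]
              rfl
            have htkn : (m ++ [a]).take (j + 1) = m := by
              rw [hjn]; exact List.take_left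
            have hsg : rho ((m ++ [a]).drop (j + 1))
                = appR a (Finsupp.single ([] : List V) 1) := by
              rw [hdropn, rho_one, appR_single]
              rfl
            rw [htk1 j (by omega), hsg, shMul_concat_appR]
            have e1 : shMul (Finsupp.single ((m ++ [a]).take j ++ [Laux (m ++ [a]) j]) (1 : ℚ))
                (Finsupp.single ([] : List V) 1) = Finsupp.single m 1 := by
              rw [← htk1 j (by omega), htkn, shMul_single_single, one_smul, shuffle_nil_right]
            have eG : Gaux m a (j + 1) = appR a (Finsupp.single m 1) := by
              rw [Gaux, if_pos hjn]
            have eF1 : Faux (m ++ [a]) j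
                = appR (Laux (m ++ [a]) j) (shMul (Finsupp.single ((m ++ [a]).take j) (1 : ℚ))
                    (appR a (Finsupp.single ([] : List V) 1))) := by
              rw [Faux, hsg]
            have eF2 : Faux (m ++ [a]) (j + 1) = 0 := by
              have := hFend
              rwa [← hjn] at this
            rw [e1, eG, eF1, eF2, sub_zero]
      rw [hlen, Finset.sum_congr rfl key, Finset.sum_add_distrib,
        Finset.sum_range_sub' (Faux' (m ++ [a])) (m.length + 1), hFend,
        show Faux' (m ++ [a]) 0 = 0 from rfl, sub_zero, add_zero, Finset.sum_range_succ]
      have hGn : Gaux m a m.length = Finsupp.single (m ++ [a]) 1 := by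
        rw [Gaux, if_pos rfl, appR_single]
      have hGk : ∀ k ∈ Finset.range m.length,
          Gaux m a k = appRL a (shMul (Finsupp.single (m.take k) (1 : ℚ)) (rho (m.drop k))) := by
        intro k hk
        rw [Finset.mem_range] at hk
        rw [Gaux, if_neg (by omega)]
        rfl
      rw [hGn, Finset.sum_congr rfl hGk, ← map_sum, ← ih, map_smul, ← appR_eq, appR_single]
      push_cast
      rw [add_smul, one_smul]
end

section
/- The operator Π_w := (1/w)·ρ_w on the weight-w component of the tensor algebra is idempotent: Π_w ∘ Π_w = Π_w. -/
namespace Dyn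
variable {V : Type*}

/-- Linear extension of a word-indexed family. -/
noncomputable def Lext (f : List V → (List V →₀ ℚ)) (x : List V →₀ ℚ) : List V →₀ ℚ :=
  x.sum fun l c => c • f l

lemma rhoL_eq (x : List V →₀ ℚ) : rhoL x = Lext rho x := rfl

@[simp] lemma Lext_zero (f : List V → (List V →₀ ℚ)) : Lext f 0 = 0 :=
  Finsupp.sum_zero_index

@[simp] lemma Lext_single (f : List V → (List V →₀ ℚ)) (l : List V) (c : ℚ) :
    Lext f (Finsupp.single l c) = c • f l :=
  Finsupp.sum_single_index (by simp)

lemma Lext_add (f : List V → (List V →₀ ℚ)) (x y : List V →₀ ℚ) :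
    Lext f (x + y) = Lext f x + Lext f y :=
  Finsupp.sum_add_index' (by simp) (fun _ _ _ => add_smul _ _ _)

lemma Lext_smul (f : List V → (List V →₀ ℚ)) (c : ℚ) (x : List V →₀ ℚ) :
    Lext f (c • x) = c • Lext f x := by
  induction x using Finsupp.induction_linear with
  | zero => simp
  | add a b ha hb => rw [smul_add, Lext_add, Lext_add, ha, hb, smul_add]
  | single l d => rw [Finsupp.smul_single, Lext_single, Lext_single, smul_smul, smul_eq_mul]

lemma Lext_sub (f : List V → (List V →₀ ℚ)) (x y : List V →₀ ℚ) :
    Lext f (x - y) = Lext f x - Lext f y := by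
  have h : x - y = x + (-1 : ℚ) • y := by rw [neg_one_smul]; abel
  rw [h, Lext_add, Lext_smul, neg_one_smul]; abel

lemma Lext_congr {f g : List V → (List V →₀ ℚ)} {x : List V →₀ ℚ}
    (h : ∀ l ∈ x.support, f l = g l) : Lext f x = Lext g x :=
  Finsupp.sum_congr fun l hl => by rw [h l hl]

lemma Lext_fun_add (f g : List V → (List V →₀ ℚ)) (x : List V →₀ ℚ) :
    Lext (fun l => f l + g l) x = Lext f x + Lext g x := by
  unfold Lext
  rw [← Finsupp.sum_add]
  exact Finsupp.sum_congr fun l _ => smul_add _ _ _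

lemma Lext_fun_sub (f g : List V → (List V →₀ ℚ)) (x : List V →₀ ℚ) :
    Lext (fun l => f l - g l) x = Lext f x - Lext g x := by
  unfold Lext
  rw [← Finsupp.sum_sub]
  exact Finsupp.sum_congr fun l _ => smul_sub _ _ _

lemma Lext_fun_smul (f : List V → (List V →₀ ℚ)) (c : ℚ) (x : List V →₀ ℚ) :
    Lext (fun l => c • f l) x = c • Lext f x := by
  induction x using Finsupp.induction_linear with
  | zero => simp
  | add a b ha hb => rw [Lext_add, Lext_add, ha, hb, smul_add]
  | single l d => rw [Lext_single, Lext_single, smul_comm]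

lemma Lext_fun_zero (x : List V →₀ ℚ) :
    Lext (fun _ : List V => (0 : List V →₀ ℚ)) x = 0 := by
  unfold Lext; simp

lemma Lext_mapDomain (f : List V → (List V →₀ ℚ)) (g : List V → List V) (x : List V →₀ ℚ) :
    Lext f (Finsupp.mapDomain g x) = Lext (fun l => f (g l)) x := by
  induction x using Finsupp.induction_linear with
  | zero => simp
  | add a b ha hb => rw [Finsupp.mapDomain_add, Lext_add, Lext_add, ha, hb]
  | single l d => rw [Finsupp.mapDomain_single, Lext_single, Lext_single]

lemma mapDomain_Lext (f : List V → (List V →₀ ℚ)) (g : List V → List V) (x : List V →₀ ℚ) :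
    Finsupp.mapDomain g (Lext f x) = Lext (fun l => Finsupp.mapDomain g (f l)) x := by
  induction x using Finsupp.induction_linear with
  | zero => simp
  | add a b ha hb => rw [Lext_add, Lext_add, Finsupp.mapDomain_add, ha, hb]
  | single l d => rw [Lext_single, Lext_single, Finsupp.mapDomain_smul]

lemma Lext_Lext (f g : List V → (List V →₀ ℚ)) (x : List V →₀ ℚ) :
    Lext g (Lext f x) = Lext (fun l => Lext g (f l)) x := by
  induction x using Finsupp.induction_linear with
  | zero => simp
  | add a b ha hb => rw [Lext_add, Lext_add, Lext_add, ha, hb]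
  | single l d => rw [Lext_single, Lext_single, Lext_smul]

lemma Lext_support {f : List V → (List V →₀ ℚ)} {x : List V →₀ ℚ} {t : List V}
    (ht : t ∈ (Lext f x).support) : ∃ l ∈ x.support, t ∈ (f l).support := by
  classical
  have := Finsupp.support_sum ht
  rw [Finset.mem_biUnion] at this
  obtain ⟨l, hl, htl⟩ := this
  exact ⟨l, hl, Finsupp.support_smul htl⟩

@[simp] lemma Lext_id (x : List V →₀ ℚ) :
    Lext (fun l => Finsupp.single l 1) x = x := by
  induction x using Finsupp.induction_linear with
  | zero => simp
  | add a b ha hb => rw [Lext_add, ha, hb]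
  | single l d => rw [Lext_single, Finsupp.smul_single, smul_eq_mul, mul_one]

/- consL / appR basics -/
lemma consL_add (a : V) (x y : List V →₀ ℚ) : consL a (x + y) = consL a x + consL a y :=
  Finsupp.mapDomain_add
lemma appR_add (a : V) (x y : List V →₀ ℚ) : appR a (x + y) = appR a x + appR a y :=
  Finsupp.mapDomain_add
lemma appR_sub (a : V) (x y : List V →₀ ℚ) : appR a (x - y) = appR a x - appR a y := by
  unfold appR
  exact (Finsupp.mapDomain.addMonoidHom _).map_sub x y
@[simp] lemma consL_single (a : V) (l : List V) (c : ℚ) :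
    consL a (Finsupp.single l c) = Finsupp.single (a :: l) c :=
  Finsupp.mapDomain_single
@[simp] lemma appR_single (a : V) (l : List V) (c : ℚ) :
    appR a (Finsupp.single l c) = Finsupp.single (l ++ [a]) c :=
  Finsupp.mapDomain_single
@[simp] lemma appR_zero (a : V) : appR a (0 : List V →₀ ℚ) = 0 := Finsupp.mapDomain_zero
@[simp] lemma consL_zero (a : V) : consL a (0 : List V →₀ ℚ) = 0 := Finsupp.mapDomain_zero
lemma appR_smul (a : V) (c : ℚ) (x : List V →₀ ℚ) : appR a (c • x) = c • appR a x :=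
  Finsupp.mapDomain_smul _ _
lemma consL_appR (a c : V) (x : List V →₀ ℚ) : consL a (appR c x) = appR c (consL a x) := by
  unfold consL appR
  rw [← Finsupp.mapDomain_comp, ← Finsupp.mapDomain_comp]
  rfl

lemma appR_support {a : V} {x : List V →₀ ℚ} {t : List V} (ht : t ∈ (appR a x).support) :
    ∃ l ∈ x.support, t = l ++ [a] := by
  classical
  have := Finsupp.mapDomain_support ht
  rw [Finset.mem_image] at this
  obtain ⟨l, hl, h⟩ := this
  exact ⟨l, hl, h.symm⟩


/- equation lemmas -/
lemma shuffle_nil (v : List V) : shuffle ([] : List V) v = Finsupp.single v 1 := by rw [shuffle]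
lemma shuffle_nil' (a : V) (u : List V) : shuffle (a :: u) [] = Finsupp.single (a :: u) 1 := by
  rw [shuffle]
lemma shuffle_cons (a b : V) (u v : List V) :
    shuffle (a :: u) (b :: v) = consL a (shuffle u (b :: v)) + consL b (shuffle (a :: u) v) := by
  rw [shuffle]
lemma shuffle_nil_right (u : List V) : shuffle u [] = Finsupp.single u 1 := by
  cases u with
  | nil => rw [shuffle]
  | cons a u => rw [shuffle]
lemma rho_cons2 (a b : V) (l : List V) :
    rho (a :: b :: l) =
      appR ((b :: l).getLast (List.cons_ne_nil _ _)) (rho (a :: (b :: l).dropLast))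
        - appR a (rho (b :: l)) := by rw [rho]
lemma rho_one (a : V) : rho [a] = Finsupp.single [a] 1 := by rw [rho]

/-- `rho` recursion with an arbitrary nonempty tail. -/
lemma rho_cons_general (h : V) (m : List V) (hm : m ≠ []) :
    rho (h :: m) = appR (m.getLast hm) (rho (h :: m.dropLast)) - appR h (rho m) := by
  cases m with
  | nil => exact absurd rfl hm
  | cons b l => exact rho_cons2 h b l

/-- general form of the `rho` recursion for words of length ≥ 2,
written as `s ++ [z]` with `s` nonempty. -/
lemma rho_concat (h : V) (s : List V) (z : V) :
    rho ((h :: s) ++ [z]) = appR z (rho (h :: s)) - appR h (rho (s ++ [z])) := by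
  have e1 : (h :: s) ++ [z] = h :: (s ++ [z]) := rfl
  rw [e1, rho_cons_general h (s ++ [z]) (by simp)]
  congr 1
  · simp [List.getLast_append, List.dropLast_concat]

lemma consL_support {a : V} {x : List V →₀ ℚ} {t : List V} (ht : t ∈ (consL a x).support) :
    ∃ l ∈ x.support, t = a :: l := by
  classical
  have := Finsupp.mapDomain_support ht
  rw [Finset.mem_image] at this
  obtain ⟨l, hl, h⟩ := this
  exact ⟨l, hl, h.symm⟩

/- support lemmas -/
lemma shuffle_support : ∀ (u v : List V), ∀ t ∈ (shuffle u v).support,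
    t.length = u.length + v.length := by
  intro u v
  induction u, v using shuffle.induct with
  | case1 v =>
    intro t ht
    rw [shuffle_nil] at ht
    simp only [Finsupp.support_single_ne_zero _ (one_ne_zero), Finset.mem_singleton] at ht
    simp [ht]
  | case2 a u =>
    intro t ht
    rw [shuffle_nil'] at ht
    simp only [Finsupp.support_single_ne_zero _ (one_ne_zero), Finset.mem_singleton] at ht
    simp [ht]
  | case3 a u b v ih1 ih2 =>
    intro t ht
    classical
    rw [shuffle_cons] at ht
    have := Finsupp.support_add ht
    rw [Finset.mem_union] at this
    rcases this with h | h
    · obtain ⟨l, hl, rfl⟩ := consL_support h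
      have := ih1 l hl
      simp only [List.length_cons, this]
      ring
    · obtain ⟨l, hl, rfl⟩ := consL_support h
      have := ih2 l hl
      simp only [List.length_cons, this]
      ring

lemma rho_support : ∀ (s : List V), ∀ t ∈ (rho s).support, t.length = s.length := by
  intro s
  induction s using rho.induct with
  | case1 => intro t ht; rw [rho] at ht; simp at ht
  | case2 a =>
    intro t ht
    rw [rho_one] at ht
    simp only [Finsupp.support_single_ne_zero _ (one_ne_zero), Finset.mem_singleton] at ht
    simp [ht]
  | case3 a b l ih1 ih2 =>
    intro t ht
    classical
    rw [rho_cons2] at ht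
    have := Finsupp.support_sub (by exact ht)
    rw [Finset.mem_union] at this
    rcases this with h | h
    · obtain ⟨l', hl', rfl⟩ := appR_support h
      have := ih1 l' hl'
      simp only [List.length_cons, List.length_dropLast, List.length_append,
        List.length_nil] at this ⊢
      omega
    · obtain ⟨l', hl', rfl⟩ := appR_support h
      have := ih2 l' hl'
      simp only [List.length_cons, List.length_append, List.length_nil] at this ⊢
      omega


lemma getLast_concat'' (d : List V) (z : V) (h : d ++ [z] ≠ []) :
    (d ++ [z]).getLast h = z := by simp [List.getLast_append]

lemma shuffle_concat_aux : ∀ (n : ℕ) (u t : List V), u.length + t.length ≤ n →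
    ∀ (hu : u ≠ []) (c : V),
    shuffle u (t ++ [c]) =
      appR c (shuffle u t) + appR (u.getLast hu) (shuffle u.dropLast (t ++ [c])) := by
  intro n
  induction n with
  | zero => intro u t h hu c; cases u with
    | nil => exact absurd rfl hu
    | cons a u => simp at h
  | succ n ih =>
    intro u t hlen hu c
    cases u with
    | nil => exact absurd rfl hu
    | cons a u₁ =>
      rcases eq_or_ne u₁ [] with rfl | hne
      · -- u = [a]
        cases t with
        | nil =>
          simp only [List.nil_append, shuffle_cons, shuffle_nil, shuffle_nil',
            consL_single, List.getLast_singleton, List.dropLast_singleton, appR_single]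
          simp [add_comm]
        | cons b t₁ =>
          have h2 : shuffle [a] (t₁ ++ [c]) =
              appR c (shuffle [a] t₁) + appR a (shuffle ([] : List V) (t₁ ++ [c])) := by
            have := ih [a] t₁ (by simp only [List.length_cons] at hlen ⊢; omega)
              (by simp) c
            simpa using this
          rw [show (b :: t₁) ++ [c] = b :: (t₁ ++ [c]) from rfl, shuffle_cons, h2,
            shuffle_cons, shuffle_nil, shuffle_nil]
          simp only [List.getLast_singleton, List.dropLast_singleton, shuffle_nil,
            consL_add, consL_single, appR_add, appR_single, consL_appR]
          simp only [List.cons_append, List.append_assoc]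
          abel
      · -- u = a :: u₁, u₁ nonempty : write u₁ = d ++ [z]
        obtain ⟨d, z, hdz⟩ : ∃ d z, u₁ = d ++ [z] :=
          ⟨u₁.dropLast, u₁.getLast hne, (List.dropLast_append_getLast hne).symm⟩
        subst hdz
        have hgl : (a :: (d ++ [z])).getLast hu = z := getLast_concat'' (a :: d) z _
        have hdl : (a :: (d ++ [z])).dropLast = a :: d := by
          have h' : ((a :: d) ++ [z]).dropLast = a :: d := List.dropLast_concat
          exact h'
        rw [hgl, hdl]
        have hnil : (d ++ [z] : List V) ≠ [] := by simp
        cases t with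
        | nil =>
          have h1 : shuffle (d ++ [z]) ([] ++ [c]) =
              appR c (shuffle (d ++ [z]) []) + appR z (shuffle d ([] ++ [c])) := by
            have := ih (d ++ [z]) [] (by
              simp only [List.length_cons, List.length_append, List.length_nil] at hlen ⊢
              omega) hnil c
            rwa [getLast_concat'' d z hnil, List.dropLast_concat] at this
          simp only [List.nil_append] at h1 ⊢
          rw [shuffle_cons, h1, shuffle_nil_right, shuffle_nil_right,
            show shuffle (a :: d) [c] = consL a (shuffle d [c]) + consL c (shuffle (a :: d) [])
              from shuffle_cons _ _ _ _, shuffle_nil_right]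
          simp only [consL_add, appR_add, consL_appR, consL_single, appR_single,
            List.cons_append, List.append_assoc]
          abel
        | cons b t₁ =>
          have h1 : shuffle (d ++ [z]) ((b :: t₁) ++ [c]) =
              appR c (shuffle (d ++ [z]) (b :: t₁)) + appR z (shuffle d ((b :: t₁) ++ [c])) := by
            have := ih (d ++ [z]) (b :: t₁) (by
              simp only [List.length_cons, List.length_append, List.length_nil] at hlen ⊢
              omega) hnil c
            rwa [getLast_concat'' d z hnil, List.dropLast_concat] at this
          have h2 : shuffle (a :: (d ++ [z])) (t₁ ++ [c]) =
              appR c (shuffle (a :: (d ++ [z])) t₁) +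
                appR z (shuffle (a :: d) (t₁ ++ [c])) := by
            have := ih (a :: (d ++ [z])) t₁ (by
              simp only [List.length_cons, List.length_append, List.length_nil] at hlen ⊢
              omega) (by simp) c
            rwa [hgl, hdl] at this
          rw [show (b :: t₁) ++ [c] = b :: (t₁ ++ [c]) from rfl] at h1 ⊢
          rw [shuffle_cons, h1, h2,
            show shuffle (a :: (d ++ [z])) (b :: t₁) =
              consL a (shuffle (d ++ [z]) (b :: t₁)) + consL b (shuffle (a :: (d ++ [z])) t₁)
              from shuffle_cons _ _ _ _,
            show shuffle (a :: d) (b :: (t₁ ++ [c])) =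
              consL a (shuffle d (b :: (t₁ ++ [c]))) + consL b (shuffle (a :: d) (t₁ ++ [c]))
              from shuffle_cons _ _ _ _]
          simp only [consL_add, appR_add, consL_appR]
          abel

lemma shuffle_concat (u : List V) (hu : u ≠ []) (t : List V) (c : V) :
    shuffle u (t ++ [c]) =
      appR c (shuffle u t) + appR (u.getLast hu) (shuffle u.dropLast (t ++ [c])) :=
  shuffle_concat_aux (u.length + t.length) u t le_rfl hu c


/-- head-removal piece of `rho`'s recursion. -/
noncomputable def psiW : List V → (List V →₀ ℚ)
  | [] => 0
  | a :: l => appR a (rho l)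

/-- last-removal piece of `rho`'s recursion. -/
noncomputable def phiW : List V → (List V →₀ ℚ)
  | [] => 0
  | a :: l => appR ((a :: l).getLast (List.cons_ne_nil _ _)) (rho ((a :: l).dropLast))

lemma psiW_cons (a : V) (l : List V) : psiW (a :: l) = appR a (rho l) := rfl

lemma phiW_concat (t : List V) (c : V) : phiW (t ++ [c]) = appR c (rho t) := by
  cases t with
  | nil => simp [phiW, rho]
  | cons h s =>
    show phiW (h :: (s ++ [c])) = _
    rw [phiW]
    congr 1
    · exact getLast_concat'' (h :: s) c _
    · have h' : ((h :: s) ++ [c]).dropLast = h :: s := List.dropLast_concat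
      rw [show (h :: (s ++ [c])).dropLast = h :: s from h']

lemma rho_eq_phiW_sub_psiW : ∀ t : List V, 2 ≤ t.length → rho t = phiW t - psiW t := by
  intro t ht
  match t with
  | a :: b :: l =>
    rw [rho_cons2, psiW_cons, phiW]
    rfl

lemma Lext_phiW_appR (c : V) (x : List V →₀ ℚ) :
    Lext phiW (appR c x) = appR c (Lext rho x) := by
  unfold appR
  rw [Lext_mapDomain, mapDomain_Lext]
  exact Lext_congr fun l _ => phiW_concat l c

lemma Lext_psiW_consL (a : V) (x : List V →₀ ℚ) :
    Lext psiW (consL a x) = appR a (Lext rho x) := by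
  unfold consL
  rw [Lext_mapDomain]
  show Lext (fun l => appR a (rho l)) x = _
  unfold appR
  rw [mapDomain_Lext]

/-- The key fact: `rho` annihilates nontrivial shuffles. -/
lemma rho_shuffle_aux : ∀ (n : ℕ) (u v : List V), u.length + v.length ≤ n →
    u ≠ [] → v ≠ [] → Lext rho (shuffle u v) = 0 := by
  intro n
  induction n with
  | zero => intro u v h hu hv; cases u with
    | nil => exact absurd rfl hu
    | cons a u => simp at h
  | succ n ih =>
    intro u v hlen hu hv
    -- decompose rho = phi - psi on words of length ≥ 2
    have hsplit : Lext rho (shuffle u v) = Lext phiW (shuffle u v) - Lext psiW (shuffle u v) := by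
      rw [show Lext phiW (shuffle u v) - Lext psiW (shuffle u v)
          = Lext (fun l => phiW l - psiW l) (shuffle u v) from (Lext_fun_sub _ _ _).symm]
      refine Lext_congr fun l hl => ?_
      refine rho_eq_phiW_sub_psiW l ?_
      rw [shuffle_support u v l hl]
      cases u with
      | nil => exact absurd rfl hu
      | cons a u' => cases v with
        | nil => exact absurd rfl hv
        | cons b v' => simp only [List.length_cons]; omega
    -- last-letter decomposition of the shuffle
    obtain ⟨u', g, rfl⟩ : ∃ u' g, u = u' ++ [g] :=
      ⟨u.dropLast, u.getLast hu, (List.dropLast_append_getLast hu).symm⟩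
    obtain ⟨v', e, rfl⟩ : ∃ v' e, v = v' ++ [e] :=
      ⟨v.dropLast, v.getLast hv, (List.dropLast_append_getLast hv).symm⟩
    have hdec : shuffle (u' ++ [g]) (v' ++ [e]) =
        appR e (shuffle (u' ++ [g]) v') + appR g (shuffle u' (v' ++ [e])) := by
      rw [shuffle_concat (u' ++ [g]) hu v' e, getLast_concat'' u' g hu,
        List.dropLast_concat]
    -- first-letter (cons) decomposition
    obtain ⟨a, u₁, hu1⟩ : ∃ a u₁, u' ++ [g] = a :: u₁ := by
      cases hc : u' ++ [g] with
      | nil => exact absurd hc hu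
      | cons a u₁ => exact ⟨a, u₁, rfl⟩
    obtain ⟨b, v₁, hv1⟩ : ∃ b v₁, v' ++ [e] = b :: v₁ := by
      cases hc : v' ++ [e] with
      | nil => exact absurd hc hv
      | cons b v₁ => exact ⟨b, v₁, rfl⟩
    have hcons : shuffle (u' ++ [g]) (v' ++ [e]) =
        consL a (shuffle u₁ (v' ++ [e])) + consL b (shuffle (u' ++ [g]) v₁) := by
      rw [hu1, hv1, shuffle_cons, ← hu1, ← hv1]
    -- compute phi and psi parts
    have hphi : Lext phiW (shuffle (u' ++ [g]) (v' ++ [e])) =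
        appR e (Lext rho (shuffle (u' ++ [g]) v')) +
          appR g (Lext rho (shuffle u' (v' ++ [e]))) := by
      rw [hdec, Lext_add, Lext_phiW_appR, Lext_phiW_appR]
    have hpsi : Lext psiW (shuffle (u' ++ [g]) (v' ++ [e])) =
        appR a (Lext rho (shuffle u₁ (v' ++ [e]))) +
          appR b (Lext rho (shuffle (u' ++ [g]) v₁)) := by
      rw [hcons, Lext_add, Lext_psiW_consL, Lext_psiW_consL]
    rw [hsplit, hphi, hpsi]
    have key : ∀ p q : List V, p ≠ [] → q ≠ [] → p.length + q.length ≤ n →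
        Lext rho (shuffle p q) = 0 := fun p q hp hq h => ih p q h hp hq
    have hlen' : u'.length + 1 + (v'.length + 1) ≤ n + 1 := by
      simpa [List.length_append] using hlen
    have hu₁ : u₁.length = u'.length := by
      have := congrArg List.length hu1
      simp only [List.length_append, List.length_cons, List.length_nil] at this
      omega
    have hv₁ : v₁.length = v'.length := by
      have := congrArg List.length hv1
      simp only [List.length_append, List.length_cons, List.length_nil] at this
      omega
    rcases eq_or_ne u' [] with rfl | hu'
    · -- u = [g]; a = g, u₁ = []
      have hg : a = g ∧ u₁ = [] := by
        simp only [List.nil_append] at hu1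
        exact ⟨(List.cons.injEq _ _ _ _ ▸ hu1.symm).1, (List.cons.injEq _ _ _ _ ▸ hu1.symm).2⟩
      obtain ⟨rfl, rfl⟩ := hg
      rcases eq_or_ne v' [] with rfl | hv'
      · have he : b = e ∧ v₁ = [] := by
          simp only [List.nil_append] at hv1
          exact ⟨(List.cons.injEq _ _ _ _ ▸ hv1.symm).1, (List.cons.injEq _ _ _ _ ▸ hv1.symm).2⟩
        obtain ⟨rfl, rfl⟩ := he
        abel
      · have h1 : Lext rho (shuffle ([] ++ [a]) v') = 0 := by
          refine key _ _ (by simp) hv' ?_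
          simp only [List.length_append, List.length_cons, List.length_nil] at hlen' ⊢
          omega
        have h2 : Lext rho (shuffle ([] ++ [a]) v₁) = 0 := by
          refine key _ _ (by simp) ?_ ?_
          · intro hc; rw [hc] at hv₁; simp at hv₁
            exact hv' (List.length_eq_zero_iff.mp hv₁.symm)
          · simp only [List.length_append, List.length_cons, List.length_nil] at hlen' ⊢
            omega
        rw [h1, h2]
        simp
    · -- u' nonempty
      have h1 : Lext rho (shuffle u' (v' ++ [e])) = 0 := by
        refine key _ _ hu' (by simp) ?_
        simp only [List.length_append, List.length_cons, List.length_nil] at hlen' ⊢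
        omega
      have hu₁ne : u₁ ≠ [] := by
        intro hc; rw [hc] at hu₁; simp at hu₁
        exact hu' (List.length_eq_zero_iff.mp hu₁.symm)
      have h2 : Lext rho (shuffle u₁ (v' ++ [e])) = 0 := by
        refine key _ _ hu₁ne (by simp) ?_
        simp only [List.length_append, List.length_cons, List.length_nil] at hlen' ⊢
        omega
      rw [h1, h2]
      rcases eq_or_ne v' [] with rfl | hv'
      · have he : b = e ∧ v₁ = [] := by
          simp only [List.nil_append] at hv1
          exact ⟨(List.cons.injEq _ _ _ _ ▸ hv1.symm).1, (List.cons.injEq _ _ _ _ ▸ hv1.symm).2⟩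
        obtain ⟨rfl, rfl⟩ := he
        simp only [appR_zero]
        abel
      · have h3 : Lext rho (shuffle (u' ++ [g]) v') = 0 := by
          refine key _ _ (by simp) hv' ?_
          simp only [List.length_append, List.length_cons, List.length_nil] at hlen' ⊢
          omega
        have hv₁ne : v₁ ≠ [] := by
          intro hc; rw [hc] at hv₁; simp at hv₁
          exact hv' (List.length_eq_zero_iff.mp hv₁.symm)
        have h4 : Lext rho (shuffle (u' ++ [g]) v₁) = 0 := by
          refine key _ _ (by simp) hv₁ne ?_
          simp only [List.length_append, List.length_cons, List.length_nil] at hlen' ⊢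
          omega
        rw [h3, h4]
        simp

lemma rho_shuffle (u v : List V) (hu : u ≠ []) (hv : v ≠ []) :
    Lext rho (shuffle u v) = 0 :=
  rho_shuffle_aux (u.length + v.length) u v le_rfl hu hv


lemma appR_Lext (c : V) (f : List V → (List V →₀ ℚ)) (x : List V →₀ ℚ) :
    appR c (Lext f x) = Lext (fun l => appR c (f l)) x := by
  unfold appR; exact mapDomain_Lext _ _ _

lemma Lext_appR (f : List V → (List V →₀ ℚ)) (c : V) (x : List V →₀ ℚ) :
    Lext f (appR c x) = Lext (fun l => f (l ++ [c])) x := by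
  unfold appR; exact Lext_mapDomain _ _ _

lemma Lext_shuffle_nil (x : List V →₀ ℚ) : Lext (shuffle []) x = x := by
  rw [Lext_congr fun l _ => shuffle_nil l]; exact Lext_id x

/-- linear version of `shuffle_concat` for a left word in concat form. -/
lemma Lext_shuffle_concat (d : List V) (g c : V) (x : List V →₀ ℚ) :
    Lext (shuffle (d ++ [g])) (appR c x) =
      appR c (Lext (shuffle (d ++ [g])) x) + appR g (Lext (shuffle d) (appR c x)) := by
  have hne : (d ++ [g] : List V) ≠ [] := by simp
  rw [Lext_appR]
  have hpt : ∀ l : List V, shuffle (d ++ [g]) (l ++ [c]) =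
      appR c (shuffle (d ++ [g]) l) + appR g (shuffle d (l ++ [c])) := by
    intro l
    rw [shuffle_concat (d ++ [g]) hne l c, getLast_concat'' d g hne, List.dropLast_concat]
  rw [Lext_congr fun l _ => hpt l, Lext_fun_add, appR_Lext, appR_Lext, Lext_appR]

/-- The Ree sum `Σ_k (prefix k) ⧢ ρ(suffix k)`, accumulated recursively. -/
noncomputable def RR : List V → List V → (List V →₀ ℚ)
  | _, [] => 0
  | u, h :: s => Lext (shuffle u) (rho (h :: s)) + RR (u ++ [h]) s
  termination_by _ s => s.length

noncomputable def Psi (z : V) : List V → List V → (List V →₀ ℚ)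
  | u, [] => shuffle u [z]
  | u, h :: s =>
      Lext (shuffle u) (rho ((h :: s) ++ [z])) - appR z (Lext (shuffle u) (rho (h :: s)))
        + Psi z (u ++ [h]) s
  termination_by _ s => s.length

lemma RR_nil (u : List V) : RR u [] = 0 := by rw [RR]
lemma RR_cons (u : List V) (h : V) (s : List V) :
    RR u (h :: s) = Lext (shuffle u) (rho (h :: s)) + RR (u ++ [h]) s := by rw [RR]
lemma Psi_nil (z : V) (u : List V) : Psi z u [] = shuffle u [z] := by rw [Psi]
lemma Psi_cons (z : V) (u : List V) (h : V) (s : List V) :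
    Psi z u (h :: s) =
      Lext (shuffle u) (rho ((h :: s) ++ [z])) - appR z (Lext (shuffle u) (rho (h :: s)))
        + Psi z (u ++ [h]) s := by rw [Psi]

lemma Psi_eq : ∀ (s : List V) (z : V),
    (Psi z [] s = Finsupp.single (s ++ [z]) 1) ∧
    ∀ (d : List V) (g : V), Psi z (d ++ [g]) s =
      Finsupp.single ((d ++ [g]) ++ s ++ [z]) 1 +
        appR g (Lext (shuffle d) (rho (s ++ [z]))) := by
  intro s
  induction s with
  | nil =>
    intro z
    constructor
    · rw [Psi_nil, shuffle_nil]; simp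
    · intro d g
      rw [Psi_nil]
      have hne : (d ++ [g] : List V) ≠ [] := by simp
      rw [show ([z] : List V) = [] ++ [z] from rfl,
        shuffle_concat (d ++ [g]) hne [] z, getLast_concat'' d g hne, List.dropLast_concat,
        shuffle_nil_right]
      simp only [List.nil_append, appR_single, rho_one, Lext_single, one_smul,
        List.append_nil]
  | cons h s' ihs =>
    intro z
    have hrec := rho_concat h s' z
    constructor
    · rw [Psi_cons, hrec]
      have hIH := (ihs z).2 [] h
      simp only [List.nil_append] at hIH
      rw [show ([] : List V) ++ [h] = [h] from rfl] at *
      rw [hIH, Lext_shuffle_nil, Lext_shuffle_nil, Lext_shuffle_nil]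
      simp only [List.cons_append, List.nil_append]
      abel
    · intro d g
      rw [Psi_cons, hrec, Lext_sub, Lext_shuffle_concat, Lext_shuffle_concat]
      have hIH := (ihs z).2 (d ++ [g]) h
      rw [hIH]
      have hcollect : Lext (shuffle d) (appR z (rho (h :: s'))) -
          Lext (shuffle d) (appR h (rho (s' ++ [z]))) =
          Lext (shuffle d) (rho ((h :: s') ++ [z])) := by
        rw [hrec, Lext_sub]
      have hlists : (d ++ [g]) ++ [h] ++ s' ++ [z] = (d ++ [g]) ++ (h :: s') ++ [z] := by
        simp [List.append_assoc]
      rw [hlists, Lext_sub, appR_sub]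
      abel

lemma RR_concat : ∀ (s u : List V) (z : V),
    RR u (s ++ [z]) = appR z (RR u s) + Psi z u s := by
  intro s
  induction s with
  | nil =>
    intro u z
    rw [RR_nil, Psi_nil, show ([] : List V) ++ [z] = [z] from rfl, RR_cons, RR_nil,
      rho_one, Lext_single, one_smul]
    simp
  | cons h s' ih =>
    intro u z
    rw [show (h :: s') ++ [z] = h :: (s' ++ [z]) from rfl, RR_cons, ih (u ++ [h]) z,
      RR_cons, Psi_cons, appR_add]
    rw [show (h :: s') ++ [z] = h :: (s' ++ [z]) from rfl]
    abel

lemma ree : ∀ l : List V, RR [] l = (l.length : ℚ) • Finsupp.single l 1 := by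
  intro l
  induction l using List.reverseRecOn with
  | nil => rw [RR_nil]; simp
  | append_singleton s z ih =>
    rw [RR_concat, ih, (Psi_eq s z).1, appR_smul, appR_single]
    have : ((s ++ [z]).length : ℚ) = (s.length : ℚ) + 1 := by
      simp [List.length_append]
    rw [this, add_smul, one_smul]

lemma Lext_rho_RR : ∀ (s u : List V), u ≠ [] → Lext rho (RR u s) = 0 := by
  intro s
  induction s with
  | nil => intro u hu; rw [RR_nil, Lext_zero]
  | cons h s' ih =>
    intro u hu
    rw [RR_cons, Lext_add, ih (u ++ [h]) (by simp), Lext_Lext]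
    have : Lext (fun l => Lext rho (shuffle u l)) (rho (h :: s')) = 0 := by
      rw [Lext_congr fun l hl => ?_, Lext_fun_zero]
      have hlen := rho_support (h :: s') l hl
      have hl0 : l ≠ [] := by
        intro hc; rw [hc] at hlen; simp at hlen
      exact rho_shuffle u l hu hl0
    rw [this, add_zero]

lemma rho_sq (l : List V) : Lext rho (rho l) = (l.length : ℚ) • rho l := by
  cases l with
  | nil => rw [rho]; simp
  | cons h m =>
    have h1 : Lext rho (RR [] (h :: m)) = Lext rho (rho (h :: m)) := by
      rw [RR_cons, Lext_add, Lext_shuffle_nil,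
        Lext_rho_RR m ([] ++ [h]) (by simp), add_zero]
    have h2 : Lext rho (RR [] (h :: m)) = ((h :: m).length : ℚ) • rho (h :: m) := by
      rw [ree, Lext_smul, Lext_single, one_smul]
    rw [← h1, h2]

end Dyn

/-- The operator `Π_w := (1/w)·ρ_w` on the weight-`w` component of the tensor algebra
is idempotent. -/
theorem stmt_4 (V : Type*) (w : ℕ) (hw : 1 ≤ w) (x : List V →₀ ℚ)
    (hx : ∀ l ∈ x.support, l.length = w) :
    (w : ℚ)⁻¹ • rhoL ((w : ℚ)⁻¹ • rhoL x) = (w : ℚ)⁻¹ • rhoL x := by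
  have hw0 : (w : ℚ) ≠ 0 := by
    exact_mod_cast Nat.cast_ne_zero.mpr (by omega)
  have hsq : Dyn.Lext rho (Dyn.Lext rho x) = (w : ℚ) • Dyn.Lext rho x := by
    rw [Dyn.Lext_Lext]
    rw [Dyn.Lext_congr fun l hl => by rw [Dyn.rho_sq l, hx l hl]]
    exact Dyn.Lext_fun_smul _ _ _
  rw [Dyn.rhoL_eq, Dyn.rhoL_eq, Dyn.Lext_smul, hsq, smul_smul, smul_smul]
  congr 1
  field_simp
end

section
/- For real x with 0 ≤ x < 1, G(−1,1;x) = −Li₂((1+x)/2) + log 2 · log(1+x) − (1/2) log² 2 + π²/12, where G(−1,1;x) = ∫₀ˣ dt/(t+1) · (−log(1−t)) is the weight-two iterated integral with singularities −1 and 1. -/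
open intervalIntegral Real MeasureTheory Set Filter Topology

/-- The dilogarithm `Li₂(z) = ∑_{n≥1} zⁿ/n²`, here via `Li₂(z) = -∫₀^z log(1-t)/t dt`. -/
noncomputable def Li2 (z : ℝ) : ℝ := -∫ t in (0:ℝ)..z, Real.log (1 - t) / t

lemma fmeas : Measurable (fun t : ℝ => Real.log (1 - t) / t) :=
  (Real.measurable_log.comp (measurable_const.sub measurable_id)).div measurable_id

lemma neg_log_le {t : ℝ} (h0 : 0 < t) (h1 : t < 1) : -Real.log (1 - t) ≤ t / (1 - t) := by
  have h : Real.log ((1 - t)⁻¹) ≤ (1 - t)⁻¹ - 1 :=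
    Real.log_le_sub_one_of_pos (inv_pos.2 (by linarith))
  rw [Real.log_inv] at h
  have hne : (1:ℝ) - t ≠ 0 := by linarith
  have h2 : (1 - t)⁻¹ - 1 = t / (1 - t) := by
    field_simp
    ring
  linarith

lemma neg_log_nonneg {t : ℝ} (h0 : 0 ≤ t) (h1 : t < 1) : 0 ≤ -Real.log (1 - t) := by
  simpa using Real.log_nonpos (by linarith) (by linarith)

/-- interval integrability on `[0,z]` for `z < 1`. -/
lemma intInt {z : ℝ} (hz0 : 0 ≤ z) (hz1 : z < 1) :
    IntervalIntegrable (fun t : ℝ => Real.log (1 - t) / t) volume 0 z := by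
  rw [intervalIntegrable_iff_integrableOn_Ioc_of_le hz0]
  apply Measure.integrableOn_of_bounded (M := (1 - z)⁻¹) (by simp) fmeas.aestronglyMeasurable
  filter_upwards [ae_restrict_mem measurableSet_Ioc] with t ht
  have ht0 := ht.1
  have ht1 : t < 1 := lt_of_le_of_lt ht.2 hz1
  rw [Real.norm_eq_abs, abs_div, abs_of_pos ht0, abs_of_nonpos (Real.log_nonpos (by linarith) (by linarith))]
  rw [div_le_iff₀ ht0]
  calc -Real.log (1 - t) ≤ t / (1 - t) := neg_log_le ht0 ht1
    _ ≤ t / (1 - z) := by gcongr <;> linarith [ht.2]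
    _ = (1 - z)⁻¹ * t := by rw [div_eq_inv_mul]

lemma intOn01 : IntegrableOn (fun t : ℝ => Real.log (1 - t) / t) (Icc (0:ℝ) 1) volume := by
  have h2 : IntegrableOn (fun t : ℝ => Real.log (1 - t) / t) (Ioc (1/2 : ℝ) 1) volume := by
    have hr : IntervalIntegrable (fun x : ℝ => x ^ (-(1/2) : ℝ)) volume 0 (1/2) :=
      intervalIntegrable_rpow' (by norm_num)
    have hr2 : IntervalIntegrable (fun x : ℝ => (1 - x) ^ (-(1/2) : ℝ)) volume (1/2) 1 := by
      have := hr.comp_sub_left 1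
      norm_num at this
      exact this.symm
    have hr3 : IntegrableOn (fun x : ℝ => 4 * (1 - x) ^ (-(1/2) : ℝ)) (Ioc (1/2 : ℝ) 1) volume := by
      have := hr2.const_mul 4
      rwa [intervalIntegrable_iff_integrableOn_Ioc_of_le (by norm_num)] at this
    apply hr3.integrable.mono' fmeas.aestronglyMeasurable
    filter_upwards [ae_restrict_mem measurableSet_Ioc] with t ht
    have ht0 : (0:ℝ) < t := lt_trans (by norm_num) ht.1
    have ht1 : t ≤ 1 := ht.2
    rcases eq_or_lt_of_le ht1 with rfl | ht1
    · simp
    have h1t : (0:ℝ) < 1 - t := by linarith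
    rw [Real.norm_eq_abs, abs_div, abs_of_pos ht0,
      abs_of_nonpos (Real.log_nonpos (by linarith) (by linarith))]
    have hs : Real.sqrt (1 - t) > 0 := Real.sqrt_pos.2 h1t
    have key : -Real.log (1 - t) ≤ 2 * (Real.sqrt (1 - t))⁻¹ := by
      have h := Real.log_le_sub_one_of_pos (inv_pos.2 hs)
      rw [Real.log_inv, Real.log_sqrt h1t.le] at h
      linarith
    have hrt : (1 - t) ^ (-(1/2) : ℝ) = (Real.sqrt (1 - t))⁻¹ := by
      rw [Real.rpow_neg h1t.le, Real.sqrt_eq_rpow]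
    rw [hrt]
    rw [div_le_iff₀ ht0]
    have h12 : (1:ℝ)/2 < t := ht.1
    nlinarith [inv_pos.2 hs, key]
  have h1 : IntegrableOn (fun t : ℝ => Real.log (1 - t) / t) (Icc (0:ℝ) (1/2)) volume := by
    have := intInt (z := 1/2) (by norm_num) (by norm_num)
    rw [intervalIntegrable_iff_integrableOn_Ioc_of_le (by norm_num)] at this
    rwa [integrableOn_Icc_iff_integrableOn_Ioc]
  have : Icc (0:ℝ) 1 ⊆ Icc (0:ℝ) (1/2) ∪ Ioc (1/2:ℝ) 1 := by
    intro t ht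
    rcases le_or_gt t (1/2) with h | h
    · exact Or.inl ⟨ht.1, h⟩
    · exact Or.inr ⟨h, ht.2⟩
  exact (h1.union h2).mono_set this

lemma Li2_zero : Li2 0 = 0 := by simp [Li2]

lemma Li2_hasDerivAt {z : ℝ} (hz0 : 0 < z) (hz1 : z < 1) :
    HasDerivAt Li2 (-Real.log (1 - z) / z) z := by
  have hcont : ContinuousAt (fun t : ℝ => Real.log (1 - t) / t) z := by
    apply ContinuousAt.div
    · exact (Real.continuousAt_log (by linarith)).comp (continuous_const.sub continuous_id).continuousAt
    · exact continuousAt_id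
    · exact ne_of_gt hz0
  have h := intervalIntegral.integral_hasDerivAt_right (intInt hz0.le hz1)
    fmeas.stronglyMeasurable.stronglyMeasurableAtFilter hcont
  have := h.neg
  rw [neg_div]; exact this

lemma hasSum_inv_sq : HasSum (fun n : ℕ => 1 / ((n : ℝ) + 1) ^ 2) (Real.pi ^ 2 / 6) := by
  have h := hasSum_zeta_two
  have h2 := (hasSum_nat_add_iff' 1).mpr h
  simp only [Finset.range_one, Finset.sum_singleton] at h2
  norm_num at h2
  convert h2 using 2 with n
  · rfl
  push_cast
  ring

lemma ae_ne_one : ∀ᵐ t : ℝ, t ≠ (1:ℝ) := by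
  rw [ae_iff]
  have : {t : ℝ | ¬ t ≠ 1} = {1} := by ext t; simp
  rw [this]
  exact Real.volume_singleton

lemma tsum_eq_neg_log {t : ℝ} (h0 : 0 < t) (h1 : t < 1) :
    ∑' n : ℕ, t ^ n / ((n : ℝ) + 1) = -(Real.log (1 - t) / t) := by
  have h := (Real.hasSum_pow_div_log_of_abs_lt_one (by rw [abs_of_pos h0]; exact h1)).div_const t
  have h2 : (fun n : ℕ => t ^ (n + 1) / ((n : ℝ) + 1) / t) = fun n : ℕ => t ^ n / ((n : ℝ) + 1) := by
    funext n
    rw [pow_succ]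
    field_simp
  rw [h2] at h
  rw [h.tsum_eq, neg_div]

lemma Li2_one : Li2 1 = Real.pi ^ 2 / 6 := by
  set F : ℕ → ℝ → ℝ := fun n t => t ^ n / ((n : ℝ) + 1) with hF
  set μ := volume.restrict (Ioc (0:ℝ) 1) with hμ
  have hF_int : ∀ n, Integrable (F n) μ := by
    intro n
    exact ((continuous_pow n).div_const _).integrableOn_Ioc
  have hval : ∀ n, ∫ a, F n a ∂μ = 1 / ((n : ℝ) + 1) ^ 2 := by
    intro n
    have : ∫ a, F n a ∂μ = ∫ t in (0:ℝ)..1, t ^ n / ((n : ℝ) + 1) := by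
      rw [intervalIntegral.integral_of_le zero_le_one]
    rw [this, intervalIntegral.integral_div, integral_pow]
    push_cast
    field_simp
    ring
  have hnorm : ∀ n, ∫ a, ‖F n a‖ ∂μ = 1 / ((n : ℝ) + 1) ^ 2 := by
    intro n
    rw [← hval n]
    apply MeasureTheory.integral_congr_ae
    filter_upwards [ae_restrict_mem measurableSet_Ioc] with t ht
    rw [Real.norm_eq_abs, abs_of_nonneg]
    exact div_nonneg (pow_nonneg ht.1.le n) (by positivity)
  have hsum := MeasureTheory.hasSum_integral_of_summable_integral_norm hF_int
    (by simp only [hnorm]; exact hasSum_inv_sq.summable)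
  simp only [hval] at hsum
  have hint_eq : ∫ a, (∑' n, F n a) ∂μ = Real.pi ^ 2 / 6 := (hasSum_inv_sq.unique hsum).symm
  have hcongr : ∫ a, (∑' n, F n a) ∂μ = ∫ a, -(Real.log (1 - a) / a) ∂μ := by
    apply MeasureTheory.integral_congr_ae
    filter_upwards [ae_restrict_mem measurableSet_Ioc, ae_restrict_of_ae ae_ne_one] with t ht hne
    exact tsum_eq_neg_log ht.1 (lt_of_le_of_ne ht.2 hne)
  rw [hcongr, MeasureTheory.integral_neg] at hint_eq
  have : Li2 1 = -∫ a, Real.log (1 - a) / a ∂μ := by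
    rw [Li2, intervalIntegral.integral_of_le zero_le_one]
  rw [this]
  linarith [hint_eq]

lemma Li2_contOn : ContinuousOn Li2 (Icc (0:ℝ) 1) := by
  have h := intervalIntegral.continuousOn_primitive_interval (a := (0:ℝ)) (b := (1:ℝ))
    (μ := volume) (f := fun t : ℝ => Real.log (1 - t) / t)
    (by rw [uIcc_of_le zero_le_one]; exact intOn01)
  rw [uIcc_of_le zero_le_one] at h
  exact h.neg

noncomputable def phi (z : ℝ) : ℝ := Li2 z + Li2 (1 - z) + Real.log z * Real.log (1 - z)

lemma phi_hasDerivAt {z : ℝ} (h0 : 0 < z) (h1 : z < 1) : HasDerivAt phi 0 z := by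
  have h1z : (0:ℝ) < 1 - z := by linarith
  have hA := Li2_hasDerivAt h0 h1
  have hBin : HasDerivAt (fun y : ℝ => 1 - y) (-1) z := (hasDerivAt_id z).const_sub 1
  have hB := (Li2_hasDerivAt h1z (by linarith)).comp z hBin
  have hlogz := Real.hasDerivAt_log (ne_of_gt h0)
  have hlog2 : HasDerivAt (fun y : ℝ => Real.log (1 - y)) (-(1 - z)⁻¹) z := by
    have := (Real.hasDerivAt_log (ne_of_gt h1z)).comp z hBin
    simpa [Function.comp_def] using this
  have hC := hlogz.mul hlog2
  have htot := (hA.add hB).add hC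
  convert htot using 1
  · rfl
  · rfl
  · rfl
  simp only [sub_sub_cancel]
  field_simp
  ring

lemma Li2_half : Li2 (1/2) = Real.pi ^ 2 / 12 - (1/2) * Real.log 2 ^ 2 := by
  have hconst : ∀ z ∈ Ico (1/2 : ℝ) 1, phi z = phi (1/2) := by
    intro z hz
    have h : ∫ t in (1/2 : ℝ)..z, (0:ℝ) = phi z - phi (1/2) := by
      apply intervalIntegral.integral_eq_sub_of_hasDerivAt
      · intro t ht
        rw [uIcc_of_le hz.1] at ht
        exact phi_hasDerivAt (lt_of_lt_of_le (by norm_num) ht.1) (lt_of_le_of_lt ht.2 hz.2)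
      · exact intervalIntegrable_const
    simp at h
    linarith
  set l := nhdsWithin (1:ℝ) (Iio 1) with hl
  have hz_mem : ∀ᶠ z in l, z ∈ Ioo (1/2 : ℝ) 1 :=
    Ioo_mem_nhdsLT_of_mem ⟨by norm_num, le_refl 1⟩
  have hid : Tendsto (fun z : ℝ => z) l (nhdsWithin 1 (Icc (0:ℝ) 1)) := by
    rw [tendsto_nhdsWithin_iff]
    refine ⟨tendsto_nhdsWithin_of_tendsto_nhds tendsto_id |>.mono_left le_rfl |>.mono_right le_rfl |>.congr (fun _ => rfl) |>.mono_left le_rfl, ?_⟩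
    · filter_upwards [hz_mem] with z hz; exact ⟨by linarith [hz.1], hz.2.le⟩
  have t1 : Tendsto Li2 l (nhds (Real.pi ^ 2 / 6)) := by
    have := (Li2_contOn 1 ⟨zero_le_one, le_refl 1⟩).tendsto
    rw [Li2_one] at this
    exact this.comp hid
  have hsub : Tendsto (fun z : ℝ => 1 - z) l (nhdsWithin 0 (Icc (0:ℝ) 1)) := by
    rw [tendsto_nhdsWithin_iff]
    constructor
    · have hc : Continuous (fun z : ℝ => 1 - z) := continuous_const.sub continuous_id
      have : Tendsto (fun z : ℝ => 1 - z) (nhds 1) (nhds 0) := by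
        simpa using hc.tendsto 1
      exact this.mono_left nhdsWithin_le_nhds
    · filter_upwards [hz_mem] with z hz; exact ⟨by linarith [hz.2], by linarith [hz.1]⟩
  have t2 : Tendsto (fun z : ℝ => Li2 (1 - z)) l (nhds 0) := by
    have := (Li2_contOn 0 ⟨le_refl 0, zero_le_one⟩).tendsto
    rw [Li2_zero] at this
    exact this.comp hsub
  have hpos : Tendsto (fun z : ℝ => 1 - z) l (nhdsWithin 0 (Ioi 0)) := by
    rw [tendsto_nhdsWithin_iff]
    constructor
    · have hc : Continuous (fun z : ℝ => 1 - z) := continuous_const.sub continuous_id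
      have : Tendsto (fun z : ℝ => 1 - z) (nhds 1) (nhds 0) := by
        simpa using hc.tendsto 1
      exact this.mono_left nhdsWithin_le_nhds
    · filter_upwards [hz_mem] with z hz; simpa using hz.2
  have t3' : Tendsto (fun z : ℝ => Real.log (1 - z) * (1 - z)) l (nhds 0) := by
    have h := tendsto_log_mul_rpow_nhdsGT_zero (r := 1) zero_lt_one
    simp only [Real.rpow_one] at h
    exact h.comp hpos
  have t3 : Tendsto (fun z : ℝ => Real.log z * Real.log (1 - z)) l (nhds 0) := by
    apply squeeze_zero_norm' (a := fun z => 2 * |Real.log (1 - z) * (1 - z)|)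
    · filter_upwards [hz_mem] with z hz
      have hz0 : (0:ℝ) < z := by linarith [hz.1]
      have hz1 : z < 1 := hz.2
      have h1z : (0:ℝ) < 1 - z := by linarith
      have hlz : |Real.log z| ≤ 2 * (1 - z) := by
        rw [abs_of_nonpos (Real.log_nonpos hz0.le hz1.le)]
        have h := Real.log_le_sub_one_of_pos (inv_pos.2 hz0)
        rw [Real.log_inv] at h
        have hz2 : (1:ℝ)/2 < z := hz.1
        have : z⁻¹ ≤ 2 := by
          rw [inv_le_comm₀ hz0 (by norm_num)]
          linarith
        nlinarith [mul_le_mul_of_nonneg_left this h1z.le, inv_mul_cancel₀ (ne_of_gt hz0)]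
      calc ‖Real.log z * Real.log (1 - z)‖ = |Real.log z| * |Real.log (1 - z)| := by
            rw [Real.norm_eq_abs, abs_mul]
        _ ≤ 2 * (1 - z) * |Real.log (1 - z)| := by
            apply mul_le_mul_of_nonneg_right hlz (abs_nonneg _)
        _ = 2 * |Real.log (1 - z) * (1 - z)| := by
            rw [abs_mul, abs_of_pos h1z]; ring
    · have := t3'.abs.const_mul (2:ℝ)
      simpa using this
  have htot : Tendsto phi l (nhds (Real.pi ^ 2 / 6 + 0 + 0)) := (t1.add t2).add t3
  have hconst' : Tendsto phi l (nhds (phi (1/2))) := by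
    apply Tendsto.congr' _ tendsto_const_nhds
    filter_upwards [hz_mem] with z hz
    exact (hconst z ⟨hz.1.le, hz.2⟩).symm
  have huniq : phi (1/2) = Real.pi ^ 2 / 6 + 0 + 0 := tendsto_nhds_unique hconst' htot
  have hexp : phi (1/2 : ℝ) = 2 * Li2 (1/2) + Real.log 2 ^ 2 := by
    have hlog : Real.log (1/2 : ℝ) = -Real.log 2 := by
      rw [one_div, Real.log_inv]
    rw [phi]
    norm_num [hlog]
    ring
  rw [hexp] at huniq
  linarith

/-- For `0 ≤ x < 1`,
`G(−1,1;x) = ∫₀ˣ dt/(t+1) · log(1−t) = −Li₂((1+x)/2) + log 2 · log(1+x) − ½ log²2 + π²/12`. -/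
theorem stmt_7 (x : ℝ) (h0 : 0 ≤ x) (h1 : x < 1) :
    (∫ t in (0:ℝ)..x, Real.log (1 - t) / (t + 1)) =
      -Li2 ((1 + x) / 2) + Real.log 2 * Real.log (1 + x)
        - (1 / 2) * (Real.log 2) ^ 2 + Real.pi ^ 2 / 12 := by
  set G : ℝ → ℝ := fun y => -Li2 ((1 + y) / 2) + Real.log 2 * Real.log (1 + y)
      - (1 / 2) * (Real.log 2) ^ 2 + Real.pi ^ 2 / 12 with hG
  have hG0 : G 0 = 0 := by
    simp only [hG]
    norm_num [Li2_half]
  have hderiv : ∀ t ∈ Set.uIcc (0:ℝ) x, HasDerivAt G (Real.log (1 - t) / (t + 1)) t := by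
    intro t ht
    rw [uIcc_of_le h0] at ht
    have ht0 : 0 ≤ t := ht.1
    have ht1 : t < 1 := lt_of_le_of_lt ht.2 h1
    have hin : HasDerivAt (fun y : ℝ => (1 + y) / 2) (1/2) t := by
      simpa using ((hasDerivAt_id t).const_add 1).div_const 2
    have hz0 : 0 < (1 + t) / 2 := by linarith
    have hz1 : (1 + t) / 2 < 1 := by linarith
    have hA := (Li2_hasDerivAt hz0 hz1).comp t hin
    have hB : HasDerivAt (fun y : ℝ => Real.log (1 + y)) ((1 + t)⁻¹) t := by
      have := (Real.hasDerivAt_log (by linarith : (1:ℝ) + t ≠ 0)).comp t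
        ((hasDerivAt_id t).const_add 1)
      simpa [Function.comp_def] using this
    have h1' := hA.neg.add (hB.const_mul (Real.log 2))
    have h2' := (h1'.sub_const ((1/2) * Real.log 2 ^ 2)).add_const (Real.pi ^ 2 / 12)
    have hval : -(-Real.log (1 - (1 + t) / 2) / ((1 + t) / 2) * (1/2)) +
        Real.log 2 * (1 + t)⁻¹ = Real.log (1 - t) / (t + 1) := by
      have harg : 1 - (1 + t) / 2 = (1 - t) / 2 := by ring
      rw [harg, Real.log_div (by linarith) (by norm_num)]
      have hne : (1:ℝ) + t ≠ 0 := by linarith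
      field_simp
      ring
    rw [hval] at h2'
    exact h2'
  have hint : IntervalIntegrable (fun t : ℝ => Real.log (1 - t) / (t + 1)) volume 0 x := by
    apply ContinuousOn.intervalIntegrable
    rw [uIcc_of_le h0]
    apply ContinuousOn.div
    · apply ContinuousOn.log
      · exact (continuous_const.sub continuous_id).continuousOn
      · intro t ht hc
        have h2 : t < 1 := lt_of_le_of_lt ht.2 h1
        have h3 : (1:ℝ) = t := sub_eq_zero.mp hc
        linarith
    · exact (continuous_id.add continuous_const).continuousOn
    · intro t ht
      have := ht.1
      intro hc
      linarith [hc]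
  have key := intervalIntegral.integral_eq_sub_of_hasDerivAt hderiv hint
  rw [key, hG0, sub_zero]
end

section
/- The depth-two stuffle relation: for integers m₁, m₂ ≥ 2 and complex x, y with |x| < 1 and |y| < 1, Li_{m₁,m₂}(x,y) + Li_{m₂,m₁}(y,x) = Li_{m₁}(x)·Li_{m₂}(y) − Li_{m₁+m₂}(x·y). -/
/-- The depth-two multiple polylogarithm
`Li_{m₁,m₂}(x,y) = ∑_{0 < n₁ < n₂} x^{n₁} y^{n₂} / (n₁^{m₁} n₂^{m₂})`. -/
noncomputable def Li2dep (m₁ m₂ : ℕ) (x y : ℂ) : ℂ :=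
  ∑' p : ℕ × ℕ,
    if 0 < p.1 ∧ p.1 < p.2 then x ^ p.1 * y ^ p.2 / ((p.1 : ℂ) ^ m₁ * (p.2 : ℂ) ^ m₂) else 0

/-- The classical polylogarithm `Li_m(z) = ∑_{n≥1} zⁿ/nᵐ`. -/
noncomputable def Li (m : ℕ) (z : ℂ) : ℂ :=
  ∑' n : ℕ, if 0 < n then z ^ n / (n : ℂ) ^ m else 0

/-- lower-triangular term -/
noncomputable def Aterm (m₁ m₂ : ℕ) (x y : ℂ) (p : ℕ × ℕ) : ℂ :=
  if 0 < p.1 ∧ p.1 < p.2 then x ^ p.1 * y ^ p.2 / ((p.1 : ℂ) ^ m₁ * (p.2 : ℂ) ^ m₂) else 0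

/-- upper-triangular term -/
noncomputable def Bterm (m₁ m₂ : ℕ) (x y : ℂ) (p : ℕ × ℕ) : ℂ :=
  if 0 < p.2 ∧ p.2 < p.1 then x ^ p.1 * y ^ p.2 / ((p.1 : ℂ) ^ m₁ * (p.2 : ℂ) ^ m₂) else 0

/-- diagonal term -/
noncomputable def Dterm (m₁ m₂ : ℕ) (x y : ℂ) (p : ℕ × ℕ) : ℂ :=
  if 0 < p.1 ∧ p.1 = p.2 then x ^ p.1 * y ^ p.2 / ((p.1 : ℂ) ^ m₁ * (p.2 : ℂ) ^ m₂) else 0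

lemma aux_summable_norm (m : ℕ) (z : ℂ) (hz : ‖z‖ < 1) :
    Summable (fun n : ℕ => ‖if 0 < n then z ^ n / (n : ℂ) ^ m else 0‖) := by
  have hz' : ‖z‖ < 1 := by exact hz
  refine Summable.of_nonneg_of_le (fun n => norm_nonneg _) (fun n => ?_)
    (summable_geometric_of_lt_one (norm_nonneg z) hz')
  by_cases hn : 0 < n
  · rw [if_pos hn, norm_div, norm_pow, norm_pow]
    have h1 : (1 : ℝ) ≤ ‖(n : ℂ)‖ ^ m := by
      refine one_le_pow₀ ?_
      rw [Complex.norm_natCast]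
      exact_mod_cast Nat.one_le_iff_ne_zero.mpr hn.ne'
    exact div_le_self (by positivity) h1
  · simp only [if_neg hn, norm_zero]
    positivity

/-- Depth-two stuffle relation: for `m₁, m₂ ≥ 2`, `|x| < 1`, `|y| < 1`,
`Li_{m₁,m₂}(x,y) + Li_{m₂,m₁}(y,x) = Li_{m₁}(x)·Li_{m₂}(y) − Li_{m₁+m₂}(x·y)`. -/
theorem stmt_10 (m₁ m₂ : ℕ) (h₁ : 2 ≤ m₁) (h₂ : 2 ≤ m₂) (x y : ℂ)
    (hx : ‖x‖ < 1) (hy : ‖y‖ < 1) :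
    Li2dep m₁ m₂ x y + Li2dep m₂ m₁ y x = Li m₁ x * Li m₂ y - Li (m₁ + m₂) (x * y) := by
  set f : ℕ → ℂ := fun n => if 0 < n then x ^ n / (n : ℂ) ^ m₁ else 0 with hf
  set g : ℕ → ℂ := fun n => if 0 < n then y ^ n / (n : ℂ) ^ m₂ else 0 with hg
  have hfs : Summable fun n => ‖f n‖ := aux_summable_norm m₁ x hx
  have hgs : Summable fun n => ‖g n‖ := aux_summable_norm m₂ y hy
  have hFs : Summable fun p : ℕ × ℕ => f p.1 * g p.2 := summable_mul_of_summable_norm hfs hgs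
  have hprod : Li m₁ x * Li m₂ y = ∑' p : ℕ × ℕ, f p.1 * g p.2 :=
    tsum_mul_tsum_of_summable_norm hfs hgs
  -- F value on positive indices
  have hFval : ∀ p : ℕ × ℕ, 0 < p.1 → 0 < p.2 →
      f p.1 * g p.2 = x ^ p.1 * y ^ p.2 / ((p.1 : ℂ) ^ m₁ * (p.2 : ℂ) ^ m₂) := by
    intro p hp1 hp2
    simp only [hf, hg, if_pos hp1, if_pos hp2]
    ring
  -- summability of the three pieces by domination
  have hdom : ∀ (T : ℕ × ℕ → ℂ),
      (∀ p, T p = 0 ∨ (0 < p.1 ∧ 0 < p.2 ∧ T p = f p.1 * g p.2)) → Summable T := by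
    intro T hT
    refine Summable.of_norm_bounded (g := fun p : ℕ × ℕ => ‖f p.1 * g p.2‖) hFs.norm (fun p => ?_)
    rcases hT p with h | ⟨_, _, h⟩
    · rw [h, norm_zero]; exact norm_nonneg _
    · rw [h]
  have hA : Summable (Aterm m₁ m₂ x y) := by
    refine hdom _ (fun p => ?_)
    by_cases h : 0 < p.1 ∧ p.1 < p.2
    · exact Or.inr ⟨h.1, h.1.trans h.2, by rw [Aterm, if_pos h, hFval p h.1 (h.1.trans h.2)]⟩
    · exact Or.inl (by rw [Aterm, if_neg h])
  have hB : Summable (Bterm m₁ m₂ x y) := by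
    refine hdom _ (fun p => ?_)
    by_cases h : 0 < p.2 ∧ p.2 < p.1
    · exact Or.inr ⟨h.1.trans h.2, h.1, by rw [Bterm, if_pos h, hFval p (h.1.trans h.2) h.1]⟩
    · exact Or.inl (by rw [Bterm, if_neg h])
  have hD : Summable (Dterm m₁ m₂ x y) := by
    refine hdom _ (fun p => ?_)
    by_cases h : 0 < p.1 ∧ p.1 = p.2
    · exact Or.inr ⟨h.1, h.2 ▸ h.1, by rw [Dterm, if_pos h, hFval p h.1 (h.2 ▸ h.1)]⟩
    · exact Or.inl (by rw [Dterm, if_neg h])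
  -- pointwise splitting
  have hpt : ∀ p : ℕ × ℕ,
      f p.1 * g p.2 = Aterm m₁ m₂ x y p + Bterm m₁ m₂ x y p + Dterm m₁ m₂ x y p := by
    rintro ⟨a, b⟩
    simp only [hf, hg, Aterm, Bterm, Dterm]
    split_ifs <;> (first | ring1 | (exfalso; omega))
  -- sum of A is the first Li2dep
  have hA_eq : ∑' p : ℕ × ℕ, Aterm m₁ m₂ x y p = Li2dep m₁ m₂ x y := by
    rw [Li2dep]; exact tsum_congr fun p => rfl
  -- sum of B is the swapped Li2dep
  have hB_eq : ∑' p : ℕ × ℕ, Bterm m₁ m₂ x y p = Li2dep m₂ m₁ y x := by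
    rw [Li2dep,
      ← (Equiv.prodComm ℕ ℕ).tsum_eq (fun p : ℕ × ℕ =>
        if 0 < p.1 ∧ p.1 < p.2 then y ^ p.1 * x ^ p.2 / ((p.1 : ℂ) ^ m₂ * (p.2 : ℂ) ^ m₁) else 0)]
    refine tsum_congr fun p => ?_
    simp only [Bterm, Equiv.prodComm_apply, Prod.fst_swap, Prod.snd_swap]
    split_ifs with h
    · simp only [h, and_self, if_true]; ring
    · simp only [h, if_false]
  -- sum of D is Li (m₁+m₂) (x*y)
  have hDfib : ∀ a : ℕ, (fun b => Dterm m₁ m₂ x y (a, b)) =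
      fun b => if b = a then (if 0 < a then (x * y) ^ a / (a : ℂ) ^ (m₁ + m₂) else 0) else 0 := by
    intro a
    funext b
    simp only [Dterm]
    by_cases hba : b = a
    · subst hba
      by_cases hb : 0 < b
      · rw [if_pos ⟨hb, rfl⟩, if_pos rfl, if_pos hb, mul_pow, pow_add]
      · rw [if_neg (by tauto), if_pos rfl, if_neg hb]
    · rw [if_neg (by omega), if_neg hba]
  have hD_eq : ∑' p : ℕ × ℕ, Dterm m₁ m₂ x y p = Li (m₁ + m₂) (x * y) := by
    rw [Li, Summable.tsum_prod' hD (fun a => by rw [hDfib a]; exact (hasSum_ite_eq a _).summable)]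
    refine tsum_congr fun a => ?_
    rw [hDfib a, tsum_ite_eq]
  have main : Li m₁ x * Li m₂ y =
      Li2dep m₁ m₂ x y + Li2dep m₂ m₁ y x + Li (m₁ + m₂) (x * y) := by
    rw [hprod, tsum_congr hpt, Summable.tsum_add (hA.add hB) hD, Summable.tsum_add hA hB, hA_eq, hB_eq, hD_eq]
  linear_combination -main
end
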